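/- arXiv:1311.3576 — 3 statements merged into one kernel-verified Lean document; each statement's English description precedes it below -/
import Mathlib

section
/- Let n ≥ 1, let P be an invertible real n×n matrix, let f, y ∈ ℝⁿ, σ² > 0 and λ > 0. Set ỹ := y − P⁻¹ f. Then the supremum over x ∈ ℝⁿ of the penalized log-likelihood l(x) := −(1/(2σ²))‖y − x‖² − (λ/2)‖P x − f‖² is attained and equals −(1/(2σ²)) ⟨ỹ, (I − (I + σ²λ Pᵀ P)⁻¹) ỹ⟩. -/
open Matrix

private lemma dp_self_nonneg {n : ℕ} (v : Fin n → ℝ) : 0 ≤ v ⬝ᵥ v :=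
  Finset.sum_nonneg fun i _ => mul_self_nonneg (v i)

/-- Let `P` be an invertible real `n × n` matrix (`n ≥ 1`), `f, y ∈ ℝⁿ`,
`σ² > 0`, `λ > 0`. Set `ỹ := y − P⁻¹ f`. Then the supremum over `x ∈ ℝⁿ` of
`l(x) := −(1/(2σ²))‖y − x‖² − (λ/2)‖P x − f‖²` is attained and equals
`−(1/(2σ²)) ⟨ỹ, (I − (I + σ²λ Pᵀ P)⁻¹) ỹ⟩`. -/
theorem profiled_penalized_likelihood_single_equation
    {n : ℕ} (hn : 1 ≤ n) (P : Matrix (Fin n) (Fin n) ℝ) (hP : IsUnit P)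
    (f y : Fin n → ℝ) (σ2 lam : ℝ) (hσ2 : 0 < σ2) (hlam : 0 < lam)
    (ytil : Fin n → ℝ) (hy : ytil = y - P⁻¹.mulVec f)
    (l : (Fin n → ℝ) → ℝ)
    (hl : ∀ x, l x = -(1 / (2 * σ2)) * ((y - x) ⬝ᵥ (y - x))
          - (lam / 2) * ((P.mulVec x - f) ⬝ᵥ (P.mulVec x - f))) :
    IsGreatest (Set.range l)
      (-(1 / (2 * σ2)) *
        (ytil ⬝ᵥ (((1 : Matrix (Fin n) (Fin n) ℝ)
            - ((1 : Matrix (Fin n) (Fin n) ℝ) + (σ2 * lam) • (Pᵀ * P))⁻¹).mulVec ytil))) := by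
  set c : ℝ := σ2 * lam with hc_def
  have hc : 0 < c := mul_pos hσ2 hlam
  set A : Matrix (Fin n) (Fin n) ℝ := 1 + c • (Pᵀ * P) with hA_def
  have hPdet : IsUnit P.det := (Matrix.isUnit_iff_isUnit_det P).mp hP
  have hPinv : P * P⁻¹ = 1 := Matrix.mul_nonsing_inv P hPdet
  -- quadratic form of A
  have quad : ∀ v : Fin n → ℝ,
      v ⬝ᵥ A.mulVec v = v ⬝ᵥ v + c * (P.mulVec v ⬝ᵥ P.mulVec v) := by
    intro v
    have h1 : A.mulVec v = v + c • (Pᵀ.mulVec (P.mulVec v)) := by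
      rw [hA_def, Matrix.add_mulVec, Matrix.one_mulVec, Matrix.smul_mulVec,
        Matrix.mulVec_mulVec]
    rw [h1, dotProduct_add, dotProduct_smul]
    have h2 : v ⬝ᵥ Pᵀ.mulVec (P.mulVec v) = P.mulVec v ⬝ᵥ P.mulVec v := by
      rw [Matrix.dotProduct_mulVec, Matrix.vecMul_transpose]
    rw [h2, smul_eq_mul]
  -- symmetry of the quadratic form
  have sym : ∀ v w : Fin n → ℝ, v ⬝ᵥ A.mulVec w = w ⬝ᵥ A.mulVec v := by
    intro v w
    have hAt : Aᵀ = A := by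
      rw [hA_def, Matrix.transpose_add, Matrix.transpose_one, Matrix.transpose_smul,
        Matrix.transpose_mul, Matrix.transpose_transpose]
    rw [Matrix.dotProduct_mulVec, ← hAt, Matrix.vecMul_transpose, dotProduct_comm, hAt]
  -- A is invertible
  have hAunit : IsUnit A := by
    rw [← Matrix.mulVec_injective_iff_isUnit]
    intro v w h
    have h0 : A.mulVec (v - w) = 0 := by rw [Matrix.mulVec_sub, h, sub_self]
    have h1 : (v - w) ⬝ᵥ (v - w) + c * (P.mulVec (v - w) ⬝ᵥ P.mulVec (v - w)) = 0 := by
      rw [← quad, h0, dotProduct_zero]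
    have h2 : (v - w) ⬝ᵥ (v - w) = 0 := by
      have := dp_self_nonneg (v - w)
      have := dp_self_nonneg (P.mulVec (v - w))
      nlinarith
    have := dotProduct_self_eq_zero.mp h2
    exact sub_eq_zero.mp this
  have hAdet : IsUnit A.det := (Matrix.isUnit_iff_isUnit_det A).mp hAunit
  have hAAinv : A * A⁻¹ = 1 := Matrix.mul_nonsing_inv A hAdet
  have hAinvA : A⁻¹ * A = 1 := Matrix.nonsing_inv_mul A hAdet
  -- key vectors
  set g : Fin n → ℝ := P⁻¹.mulVec f with hg_def
  set b : Fin n → ℝ := y + c • Pᵀ.mulVec f with hb_def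
  set xs : Fin n → ℝ := A⁻¹.mulVec b with hxs_def
  have hPg : P.mulVec g = f := by
    rw [hg_def, Matrix.mulVec_mulVec, hPinv, Matrix.one_mulVec]
  have hAxs : A.mulVec xs = b := by
    rw [hxs_def, Matrix.mulVec_mulVec, hAAinv, Matrix.one_mulVec]
  have hAg : A.mulVec g = g + c • Pᵀ.mulVec f := by
    have h1 : Pᵀ * P * P⁻¹ = Pᵀ := by rw [mul_assoc, hPinv, mul_one]
    rw [hA_def, Matrix.add_mulVec, Matrix.one_mulVec, Matrix.smul_mulVec,
      Matrix.mulVec_mulVec, h1]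
  have hb : b = ytil + A.mulVec g := by
    rw [hAg, hy, hb_def]
    abel
  have hxs2 : xs = A⁻¹.mulVec ytil + g := by
    rw [hxs_def, hb, Matrix.mulVec_add, Matrix.mulVec_mulVec, hAinvA, Matrix.one_mulVec]
  -- the constant identity
  have hconst : y ⬝ᵥ y + c * (f ⬝ᵥ f) - xs ⬝ᵥ b
      = ytil ⬝ᵥ ytil - ytil ⬝ᵥ A⁻¹.mulVec ytil := by
    have e1 : xs ⬝ᵥ b = A⁻¹.mulVec ytil ⬝ᵥ ytil + A⁻¹.mulVec ytil ⬝ᵥ A.mulVec g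
        + g ⬝ᵥ ytil + g ⬝ᵥ A.mulVec g := by
      rw [hxs2, hb, add_dotProduct, dotProduct_add, dotProduct_add]
      ring
    have e2 : A⁻¹.mulVec ytil ⬝ᵥ ytil = ytil ⬝ᵥ A⁻¹.mulVec ytil := dotProduct_comm _ _
    have e3 : A⁻¹.mulVec ytil ⬝ᵥ A.mulVec g = g ⬝ᵥ ytil := by
      rw [sym (A⁻¹.mulVec ytil) g, Matrix.dotProduct_mulVec]
      have h1 : (g ᵥ* A) ⬝ᵥ A⁻¹.mulVec ytil = ((g ᵥ* A) ᵥ* A⁻¹) ⬝ᵥ ytil := by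
        rw [Matrix.dotProduct_mulVec]
      rw [h1, Matrix.vecMul_vecMul, hAAinv, Matrix.vecMul_one]
    have e4 : g ⬝ᵥ A.mulVec g = g ⬝ᵥ g + c * (f ⬝ᵥ f) := by rw [quad, hPg]
    have e5 : ytil ⬝ᵥ ytil = y ⬝ᵥ y - 2 * (g ⬝ᵥ y) + g ⬝ᵥ g := by
      rw [hy]
      rw [show y - P⁻¹.mulVec f = y - g from rfl]
      rw [sub_dotProduct, dotProduct_sub, dotProduct_sub, dotProduct_comm g y]
      ring
    have e6 : g ⬝ᵥ ytil = g ⬝ᵥ y - g ⬝ᵥ g := by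
      rw [hy, show y - P⁻¹.mulVec f = y - g from rfl, dotProduct_sub]
    have e7 : g ⬝ᵥ y = y ⬝ᵥ g := dotProduct_comm _ _
    rw [e1, e2, e3, e4, e5, e6]
    rw [dotProduct_comm g y]
    ring
  -- target scalar
  set T : ℝ := ytil ⬝ᵥ (((1 : Matrix (Fin n) (Fin n) ℝ) - A⁻¹).mulVec ytil) with hT_def
  have hT : T = ytil ⬝ᵥ ytil - ytil ⬝ᵥ A⁻¹.mulVec ytil := by
    rw [hT_def, Matrix.sub_mulVec, Matrix.one_mulVec, dotProduct_sub]
  -- the key identity, pointwise in x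
  have key : ∀ x : Fin n → ℝ,
      (y - x) ⬝ᵥ (y - x) + c * ((P.mulVec x - f) ⬝ᵥ (P.mulVec x - f))
        = (x - xs) ⬝ᵥ A.mulVec (x - xs) + T := by
    intro x
    have E1 : (y - x) ⬝ᵥ (y - x) = y ⬝ᵥ y - 2 * (x ⬝ᵥ y) + x ⬝ᵥ x := by
      rw [sub_dotProduct, dotProduct_sub, dotProduct_sub, dotProduct_comm y x]
      ring
    have E2 : (P.mulVec x - f) ⬝ᵥ (P.mulVec x - f)
        = P.mulVec x ⬝ᵥ P.mulVec x - 2 * (x ⬝ᵥ Pᵀ.mulVec f) + f ⬝ᵥ f := by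
      have h1 : P.mulVec x ⬝ᵥ f = x ⬝ᵥ Pᵀ.mulVec f := by
        rw [Matrix.dotProduct_mulVec, Matrix.vecMul_transpose]
      rw [sub_dotProduct, dotProduct_sub, dotProduct_sub, dotProduct_comm f (P.mulVec x), h1]
      ring
    have E3 : x ⬝ᵥ A.mulVec x = x ⬝ᵥ x + c * (P.mulVec x ⬝ᵥ P.mulVec x) := quad x
    have E4 : x ⬝ᵥ b = x ⬝ᵥ y + c * (x ⬝ᵥ Pᵀ.mulVec f) := by
      rw [hb_def, dotProduct_add, dotProduct_smul, smul_eq_mul]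
    have E5 : (x - xs) ⬝ᵥ A.mulVec (x - xs)
        = x ⬝ᵥ A.mulVec x - 2 * (x ⬝ᵥ b) + xs ⬝ᵥ b := by
      rw [Matrix.mulVec_sub, sub_dotProduct, dotProduct_sub, dotProduct_sub,
        sym xs x, hAxs]
      ring
    rw [E1, E2, E5, E3, hT]
    have := hconst
    linarith [E4, hconst]
  -- rewrite l in terms of the key identity
  have hlV : ∀ x : Fin n → ℝ,
      l x = -(1 / (2 * σ2)) * ((x - xs) ⬝ᵥ A.mulVec (x - xs) + T) := by
    intro x
    rw [hl x]
    have h2 : lam / 2 = (1 / (2 * σ2)) * c := by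
      rw [hc_def]; field_simp
    rw [h2, ← key x]
    ring
  have hmatch : (((1 : Matrix (Fin n) (Fin n) ℝ)
      - ((1 : Matrix (Fin n) (Fin n) ℝ) + (σ2 * lam) • (Pᵀ * P))⁻¹).mulVec ytil)
      = ((1 : Matrix (Fin n) (Fin n) ℝ) - A⁻¹).mulVec ytil := rfl
  constructor
  · refine ⟨xs, ?_⟩
    rw [hlV xs, sub_self]
    simp
  · rintro z ⟨x, rfl⟩
    rw [hlV x]
    have hq : 0 ≤ (x - xs) ⬝ᵥ A.mulVec (x - xs) := by
      rw [quad]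
      have := dp_self_nonneg (x - xs)
      have := dp_self_nonneg (P.mulVec (x - xs))
      nlinarith
    have hpos : 0 < 1 / (2 * σ2) := by positivity
    nlinarith
end

section
/- Let n ≥ 1, m ≥ 1, let Θ be an arbitrary parameter type, and for each θ ∈ Θ and each j ∈ {1,…,m} let P_j(θ) be an invertible real n×n matrix and f_j(θ) ∈ ℝⁿ a vector. Let y_j ∈ ℝⁿ and σ_j² > 0 for each j, and let λ > 0. Define L(θ) := sup over (x_1,…,x_m) ∈ (ℝⁿ)^m of Σⱼ [ −(1/(2σ_j²))‖y_j − x_j‖² − (λ/2)‖P_j(θ) x_j − f_j(θ)‖² ], and define g(θ) := −Σⱼ (1/(2σ_j²)) ⟨ỹ_j(θ), (I − (I + σ_j²λ P_j(θ)ᵀ P_j(θ))⁻¹) ỹ_j(θ)⟩ where ỹ_j(θ) := y_j − P_j(θ)⁻¹ f_j(θ). Then L(θ) = g(θ) for every θ ∈ Θ; consequently a parameter θ₀ maximizes L over Θ if and only if it maximizes g over Θ. -/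
open Matrix

lemma dtp {n : ℕ} (A : Matrix (Fin n) (Fin n) ℝ) (a b : Fin n → ℝ) :
    (A *ᵥ a) ⬝ᵥ b = a ⬝ᵥ (Aᵀ *ᵥ b) := by
  rw [dotProduct_comm, dotProduct_mulVec, ← mulVec_transpose, dotProduct_comm]

lemma keylem {n : ℕ} (P : Matrix (Fin n) (Fin n) ℝ) (hP : IsUnit P)
    (f y : Fin n → ℝ) (σ2 lam : ℝ) (hσ2 : 0 < σ2) (hlam : 0 < lam) :
    ∃ xs : Fin n → ℝ,
      (-(1 / (2 * σ2)) * ((y - xs) ⬝ᵥ (y - xs))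
          - (lam / 2) * ((P *ᵥ xs - f) ⬝ᵥ (P *ᵥ xs - f))
        = -((1 / (2 * σ2)) *
            ((y - P⁻¹ *ᵥ f) ⬝ᵥ
              (((1 : Matrix (Fin n) (Fin n) ℝ)
                - ((1 : Matrix (Fin n) (Fin n) ℝ) + (σ2 * lam) • (Pᵀ * P))⁻¹) *ᵥ (y - P⁻¹ *ᵥ f))))) ∧
      (∀ x : Fin n → ℝ,
        -(1 / (2 * σ2)) * ((y - x) ⬝ᵥ (y - x))
          - (lam / 2) * ((P *ᵥ x - f) ⬝ᵥ (P *ᵥ x - f))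
        ≤ -((1 / (2 * σ2)) *
            ((y - P⁻¹ *ᵥ f) ⬝ᵥ
              (((1 : Matrix (Fin n) (Fin n) ℝ)
                - ((1 : Matrix (Fin n) (Fin n) ℝ) + (σ2 * lam) • (Pᵀ * P))⁻¹) *ᵥ (y - P⁻¹ *ᵥ f))))) := by
  have hPdet : IsUnit P.det := P.isUnit_iff_isUnit_det.mp hP
  set c : ℝ := σ2 * lam with hc
  have hcpos : 0 < c := mul_pos hσ2 hlam
  set M : Matrix (Fin n) (Fin n) ℝ := 1 + c • (Pᵀ * P) with hM
  -- M is positive definite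
  have hMpd : M.PosDef := by
    refine posDef_iff_dotProduct_mulVec.mpr ⟨?_, ?_⟩
    · show Mᴴ = M
      rw [conjTranspose_eq_transpose_of_trivial, hM]
      simp [transpose_add, transpose_smul, transpose_mul, transpose_one]
    · intro x hx
      have hxx : 0 < x ⬝ᵥ x := by
        rcases lt_or_eq_of_le (Finset.sum_nonneg fun i _ => mul_self_nonneg (x i) :
            (0:ℝ) ≤ x ⬝ᵥ x) with h | h
        · exact h
        · exact absurd (dotProduct_self_eq_zero.mp h.symm) hx
      have hPx : (0:ℝ) ≤ (P *ᵥ x) ⬝ᵥ (P *ᵥ x) :=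
        Finset.sum_nonneg fun i _ => mul_self_nonneg _
      have hexp : x ⬝ᵥ (M *ᵥ x) = x ⬝ᵥ x + c * ((P *ᵥ x) ⬝ᵥ (P *ᵥ x)) := by
        rw [hM, add_mulVec, one_mulVec, dotProduct_add, smul_mulVec,
          dotProduct_smul, ← mulVec_mulVec, smul_eq_mul]
        congr 1
        rw [← dtp P x (P *ᵥ x)]
      simpa [hexp] using add_pos_of_pos_of_nonneg hxx (mul_nonneg hcpos.le hPx)
  have hMdet : IsUnit M.det := M.isUnit_iff_isUnit_det.mp hMpd.isUnit
  set yt : Fin n → ℝ := y - P⁻¹ *ᵥ f with hyt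
  set z : Fin n → ℝ := M⁻¹ *ᵥ yt with hzdef
  have hz : M *ᵥ z = yt := by
    rw [hzdef, mulVec_mulVec, M.mul_nonsing_inv hMdet, one_mulVec]
  have hNy : ((1 : Matrix (Fin n) (Fin n) ℝ) - M⁻¹) *ᵥ yt = yt - z := by
    rw [sub_mulVec, one_mulVec, hzdef]
  have hu : yt - z = c • (Pᵀ *ᵥ (P *ᵥ z)) := by
    have : M *ᵥ z = z + c • (Pᵀ *ᵥ (P *ᵥ z)) := by
      rw [hM, add_mulVec, one_mulVec, smul_mulVec, ← mulVec_mulVec]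
    rw [← hz, this]; abel
  have hPf : P *ᵥ (P⁻¹ *ᵥ f) = f := by
    rw [mulVec_mulVec, P.mul_nonsing_inv hPdet, one_mulVec]
  have dotnn : ∀ v : Fin n → ℝ, (0:ℝ) ≤ v ⬝ᵥ v :=
    fun v => Finset.sum_nonneg fun i _ => mul_self_nonneg (v i)
  have main : ∀ x : Fin n → ℝ,
      -(1 / (2 * σ2)) * ((y - x) ⬝ᵥ (y - x))
        - (lam / 2) * ((P *ᵥ x - f) ⬝ᵥ (P *ᵥ x - f))
      = -((1 / (2 * σ2)) * (yt ⬝ᵥ (yt - z)))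
        - ((1 / (2 * σ2)) * ((x - (P⁻¹ *ᵥ f + z)) ⬝ᵥ (x - (P⁻¹ *ᵥ f + z)))
           + (lam / 2) * ((P *ᵥ (x - (P⁻¹ *ᵥ f + z))) ⬝ᵥ (P *ᵥ (x - (P⁻¹ *ᵥ f + z))))) := by
    intro x
    set d : Fin n → ℝ := x - (P⁻¹ *ᵥ f + z) with hd
    have e1 : y - x = (yt - z) - d := by rw [hyt, hd]; abel
    have e2 : P *ᵥ x - f = P *ᵥ z + P *ᵥ d := by
      rw [hd, mulVec_sub, mulVec_add, hPf]; abel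
    rw [e1, e2]
    set u : Fin n → ℝ := yt - z with hudef
    set w : Fin n → ℝ := P *ᵥ z with hwdef
    set pd : Fin n → ℝ := P *ᵥ d with hpddef
    have hA : u ⬝ᵥ d = c * (w ⬝ᵥ pd) := by
      rw [hu, smul_dotProduct, dtp Pᵀ w d, transpose_transpose, smul_eq_mul, hpddef]
    have hB : yt ⬝ᵥ u = u ⬝ᵥ u + c * (w ⬝ᵥ w) := by
      have hyz : yt = u + z := by rw [hudef]; abel
      have hz2 : z ⬝ᵥ u = c * (w ⬝ᵥ w) := by
        rw [hu, dotProduct_smul, smul_eq_mul, ← dtp P z w, ← hwdef]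
      rw [hyz, add_dotProduct, hz2]
    have hC : d ⬝ᵥ u = u ⬝ᵥ d := dotProduct_comm _ _
    have hD : pd ⬝ᵥ w = w ⬝ᵥ pd := dotProduct_comm _ _
    have hσ2' : σ2 ≠ 0 := ne_of_gt hσ2
    rw [hc] at hA hB
    clear_value u w pd d
    rw [dotProduct_sub, sub_dotProduct, sub_dotProduct, dotProduct_add,
      add_dotProduct, add_dotProduct, hB, hC, hD, hA]
    field_simp
    ring
  refine ⟨P⁻¹ *ᵥ f + z, ?_, ?_⟩
  · rw [hNy, main (P⁻¹ *ᵥ f + z)]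
    simp
  · intro x
    rw [hNy, main x]
    have h1 : (0:ℝ) ≤ (1 / (2 * σ2)) * ((x - (P⁻¹ *ᵥ f + z)) ⬝ᵥ (x - (P⁻¹ *ᵥ f + z))) :=
      mul_nonneg (by positivity) (dotnn _)
    have h2 : (0:ℝ) ≤ (lam / 2) * ((P *ᵥ (x - (P⁻¹ *ᵥ f + z))) ⬝ᵥ (P *ᵥ (x - (P⁻¹ *ᵥ f + z)))) :=
      mul_nonneg (by positivity) (dotnn _)
    linarith

/-- **Proposition 2 of the paper.** For each parameter `θ` and each
`j ∈ {1,…,m}` let `P_j(θ)` be an invertible real `n × n` matrix and `f_j(θ) ∈ ℝⁿ`.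
Given data `y_j ∈ ℝⁿ`, variances `σ_j² > 0` and `λ > 0`, define
`L(θ) := sup over (x_1,…,x_m)` of `Σⱼ [−(1/(2σ_j²))‖y_j − x_j‖² − (λ/2)‖P_j(θ) x_j − f_j(θ)‖²]`
and
`g(θ) := −Σⱼ (1/(2σ_j²)) ⟨ỹ_j(θ), (I − (I + σ_j²λ P_j(θ)ᵀ P_j(θ))⁻¹) ỹ_j(θ)⟩`,
where `ỹ_j(θ) := y_j − P_j(θ)⁻¹ f_j(θ)`. Then `L = g`; consequently `θ₀` maximizes
`L` over `Θ` iff it maximizes `g` over `Θ`. -/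
theorem profiled_penalized_likelihood_system
    {n m : ℕ} (hn : 1 ≤ n) (hm : 1 ≤ m) {Θ : Type*}
    (P : Θ → Fin m → Matrix (Fin n) (Fin n) ℝ) (hP : ∀ θ j, IsUnit (P θ j))
    (f : Θ → Fin m → Fin n → ℝ) (y : Fin m → Fin n → ℝ)
    (σ2 : Fin m → ℝ) (hσ2 : ∀ j, 0 < σ2 j) (lam : ℝ) (hlam : 0 < lam)
    (ytil : Θ → Fin m → Fin n → ℝ)
    (hytil : ∀ θ j, ytil θ j = y j - (P θ j)⁻¹.mulVec (f θ j))
    (L g : Θ → ℝ)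
    (hL : ∀ θ, L θ = ⨆ x : Fin m → Fin n → ℝ, ∑ j : Fin m,
        (-(1 / (2 * σ2 j)) * ((y j - x j) ⬝ᵥ (y j - x j))
          - (lam / 2) * (((P θ j).mulVec (x j) - f θ j) ⬝ᵥ ((P θ j).mulVec (x j) - f θ j))))
    (hg : ∀ θ, g θ = -∑ j : Fin m, (1 / (2 * σ2 j)) *
        (ytil θ j ⬝ᵥ (((1 : Matrix (Fin n) (Fin n) ℝ)
            - ((1 : Matrix (Fin n) (Fin n) ℝ) + (σ2 j * lam) • ((P θ j)ᵀ * P θ j))⁻¹).mulVec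
              (ytil θ j)))) :
    (∀ θ, L θ = g θ) ∧
      ∀ θ₀ : Θ, (∀ θ, L θ ≤ L θ₀) ↔ (∀ θ, g θ ≤ g θ₀) := by
  have hLg : ∀ θ, L θ = g θ := by
    intro θ
    choose xs hx hle using fun j : Fin m =>
      keylem (P θ j) (hP θ j) (f θ j) (y j) (σ2 j) lam (hσ2 j) hlam
    rw [hL θ, hg θ]
    simp only [hytil θ]
    rw [← Finset.sum_neg_distrib]
    have hbound : ∀ x : Fin m → Fin n → ℝ,
        ∑ j : Fin m, (-(1 / (2 * σ2 j)) * ((y j - x j) ⬝ᵥ (y j - x j))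
          - (lam / 2) * (((P θ j).mulVec (x j) - f θ j) ⬝ᵥ ((P θ j).mulVec (x j) - f θ j)))
        ≤ ∑ j : Fin m, -((1 / (2 * σ2 j)) *
            ((y j - (P θ j)⁻¹ *ᵥ f θ j) ⬝ᵥ
              (((1 : Matrix (Fin n) (Fin n) ℝ)
                - ((1 : Matrix (Fin n) (Fin n) ℝ)
                    + (σ2 j * lam) • ((P θ j)ᵀ * P θ j))⁻¹) *ᵥ (y j - (P θ j)⁻¹ *ᵥ f θ j)))) :=
      fun x => Finset.sum_le_sum fun j _ => hle j (x j)
    apply le_antisymm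
    · exact ciSup_le hbound
    · calc
        _ = ∑ j : Fin m, (-(1 / (2 * σ2 j)) * ((y j - xs j) ⬝ᵥ (y j - xs j))
              - (lam / 2) * (((P θ j).mulVec (xs j) - f θ j) ⬝ᵥ ((P θ j).mulVec (xs j) - f θ j))) :=
          (Finset.sum_congr rfl fun j _ => (hx j).symm)
        _ ≤ _ := le_ciSup ⟨_, by rintro r ⟨x, rfl⟩; exact hbound x⟩ xs
  exact ⟨hLg, fun θ₀ => by simp only [hLg]⟩
end

section
/- Let n ≥ 1, let P be an invertible real n×n matrix, let f, y ∈ ℝⁿ, σ² > 0 and λ > 0. Then the function l(x) := −(1/(2σ²))‖y − x‖² − (λ/2)‖P x − f‖² has the unique global maximizer x̂ := (I + σ²λ Pᵀ P)⁻¹ (y + σ²λ Pᵀ f), and x̂ admits the kernel representation x̂ = K α̂ + P⁻¹ f, where K := (Pᵀ P)⁻¹ and α̂ := (K + λσ² I)⁻¹ (y − P⁻¹ f). -/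
open Matrix

/-- Let `P` be an invertible real `n × n` matrix (`n ≥ 1`), `f, y ∈ ℝⁿ`,
`σ² > 0`, `λ > 0`. Then `l(x) := −(1/(2σ²))‖y − x‖² − (λ/2)‖P x − f‖²` has the unique
global maximizer `x̂ := (I + σ²λ Pᵀ P)⁻¹ (y + σ²λ Pᵀ f)`, and `x̂` admits the kernel
representation `x̂ = K α̂ + P⁻¹ f`, where `K := (Pᵀ P)⁻¹` and
`α̂ := (K + λσ² I)⁻¹ (y − P⁻¹ f)`. -/
theorem closed_form_state_estimate
    {n : ℕ} (hn : 1 ≤ n) (P : Matrix (Fin n) (Fin n) ℝ) (hP : IsUnit P)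
    (f y : Fin n → ℝ) (σ2 lam : ℝ) (hσ2 : 0 < σ2) (hlam : 0 < lam)
    (l : (Fin n → ℝ) → ℝ)
    (hl : ∀ x, l x = -(1 / (2 * σ2)) * ((y - x) ⬝ᵥ (y - x))
          - (lam / 2) * ((P.mulVec x - f) ⬝ᵥ (P.mulVec x - f)))
    (xhat : Fin n → ℝ)
    (hxhat : xhat = ((1 : Matrix (Fin n) (Fin n) ℝ) + (σ2 * lam) • (Pᵀ * P))⁻¹.mulVec
        (y + (σ2 * lam) • Pᵀ.mulVec f))
    (K : Matrix (Fin n) (Fin n) ℝ) (hK : K = (Pᵀ * P)⁻¹)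
    (αhat : Fin n → ℝ)
    (hαhat : αhat = (K + (lam * σ2) • (1 : Matrix (Fin n) (Fin n) ℝ))⁻¹.mulVec
        (y - P⁻¹.mulVec f)) :
    (∀ x : Fin n → ℝ, l x ≤ l xhat ∧ (l x = l xhat ↔ x = xhat)) ∧
      xhat = K.mulVec αhat + P⁻¹.mulVec f := by
  have hnn : ∀ v : Fin n → ℝ, 0 ≤ v ⬝ᵥ v := fun v => by
    simpa using dotProduct_star_self_nonneg v
  set c : ℝ := σ2 * lam with hc
  have hc0 : 0 < c := mul_pos hσ2 hlam
  have hPinj : Function.Injective P.mulVec := Matrix.mulVec_injective_iff_isUnit.2 hP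
  -- Pᵀ * P is positive definite
  have hPTP : (Pᵀ * P).PosDef := by
    refine Matrix.PosDef.of_dotProduct_mulVec_pos (by simpa using Matrix.isHermitian_conjTranspose_mul_self P) fun x hx => ?_
    have hPx : P.mulVec x ≠ 0 := fun h => hx (hPinj (by simp [h]))
    have h1 : star x ⬝ᵥ (Pᵀ * P).mulVec x = P.mulVec x ⬝ᵥ P.mulVec x := by
      rw [star_trivial, ← Matrix.mulVec_mulVec, Matrix.dotProduct_mulVec,
        Matrix.vecMul_transpose]
    rw [h1]
    simpa using Matrix.dotProduct_star_self_pos_iff.mpr hPx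
  set A : Matrix (Fin n) (Fin n) ℝ := 1 + c • (Pᵀ * P) with hA
  have hsmul : (c • (Pᵀ * P)).PosSemidef := by
    have hherm : (c • (Pᵀ * P)).IsHermitian := by
      show (c • (Pᵀ * P))ᴴ = c • (Pᵀ * P)
      rw [Matrix.conjTranspose_smul, hPTP.1.eq, star_trivial]
    refine Matrix.PosSemidef.of_dotProduct_mulVec_nonneg hherm fun x => ?_
    rw [Matrix.smul_mulVec, dotProduct_smul, smul_eq_mul]
    exact mul_nonneg hc0.le (hPTP.posSemidef.dotProduct_mulVec_nonneg x)
  have hApd : A.PosDef := Matrix.PosDef.add_posSemidef Matrix.PosDef.one hsmul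
  have hAunit : IsUnit A := hApd.isUnit
  have hAmul : A * A⁻¹ = 1 := Matrix.mul_nonsing_inv A ((Matrix.isUnit_iff_isUnit_det A).1 hAunit)
  have hAx : A.mulVec xhat = y + c • Pᵀ.mulVec f := by
    rw [hxhat, Matrix.mulVec_mulVec, hAmul, Matrix.one_mulVec]
  -- linear term identity
  have hlin : ∀ d : Fin n → ℝ,
      d ⬝ᵥ (y - xhat) = c * (P.mulVec d ⬝ᵥ (P.mulVec xhat - f)) := by
    intro d
    have h2 : xhat + c • (Pᵀ * P).mulVec xhat = y + c • Pᵀ.mulVec f := by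
      rw [← hAx, hA, Matrix.add_mulVec, Matrix.one_mulVec, Matrix.smul_mulVec]
    have h1 : y - xhat = c • (Pᵀ * P).mulVec xhat - c • Pᵀ.mulVec f := by
      linear_combination (norm := module) -h2
    rw [h1, dotProduct_sub, dotProduct_smul, dotProduct_smul,
      smul_eq_mul, smul_eq_mul, dotProduct_sub, ← Matrix.mulVec_mulVec,
      Matrix.dotProduct_mulVec, Matrix.vecMul_transpose,
      Matrix.dotProduct_mulVec (v := d) (A := Pᵀ), Matrix.vecMul_transpose]
    ring
  -- key quadratic expansion
  have key : ∀ x : Fin n → ℝ, l x = l xhat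
      - (1 / (2 * σ2)) * ((x - xhat) ⬝ᵥ (x - xhat))
      - (lam / 2) * ((P.mulVec (x - xhat)) ⬝ᵥ (P.mulVec (x - xhat))) := by
    intro x
    have hyx : y - x = (y - xhat) - (x - xhat) := by abel
    have hpx : P.mulVec x - f = (P.mulVec xhat - f) + P.mulVec (x - xhat) := by
      rw [Matrix.mulVec_sub]; abel
    rw [hl x, hl xhat, hyx, hpx]
    set d := x - xhat with hd
    set ey := y - xhat with hey
    set r := P.mulVec xhat - f with hr
    have hlx : d ⬝ᵥ ey = c * (P.mulVec d ⬝ᵥ r) := hlin d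
    have hc1 : ey ⬝ᵥ d = d ⬝ᵥ ey := dotProduct_comm _ _
    have hc2 : r ⬝ᵥ P.mulVec d = P.mulVec d ⬝ᵥ r := dotProduct_comm _ _
    simp only [sub_dotProduct, dotProduct_sub, add_dotProduct,
      dotProduct_add]
    rw [hc1, hc2, hlx, hc]
    field_simp
    ring
  have hmax : ∀ x : Fin n → ℝ, l x ≤ l xhat ∧ (l x = l xhat ↔ x = xhat) := by
    intro x
    have h1 := hnn (x - xhat)
    have h2 := hnn (P.mulVec (x - xhat))
    have hk := key x
    constructor
    · nlinarith [mul_nonneg (le_of_lt (by positivity : (0:ℝ) < 1 / (2 * σ2))) h1,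
        mul_nonneg (le_of_lt (by positivity : (0:ℝ) < lam / 2)) h2]
    · constructor
      · intro he
        have hz : (x - xhat) ⬝ᵥ (x - xhat) = 0 := by
          by_contra hne
          have hpos : 0 < (x - xhat) ⬝ᵥ (x - xhat) := lt_of_le_of_ne h1 (Ne.symm hne)
          nlinarith [mul_pos (by positivity : (0:ℝ) < 1 / (2 * σ2)) hpos,
            mul_nonneg (le_of_lt (by positivity : (0:ℝ) < lam / 2)) h2]
        have : x - xhat = 0 := dotProduct_self_eq_zero.1 hz
        have := sub_eq_zero.1 this
        exact this
      · intro he; rw [he]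
  refine ⟨hmax, ?_⟩
  -- kernel representation
  have hPTPunit : IsUnit (Pᵀ * P) := hPTP.isUnit
  have hKmul : (Pᵀ * P) * K = 1 := by
    rw [hK]; exact Matrix.mul_nonsing_inv _ ((Matrix.isUnit_iff_isUnit_det _).1 hPTPunit)
  have hKIpd : (K + (lam * σ2) • (1 : Matrix (Fin n) (Fin n) ℝ)).PosDef := by
    refine Matrix.PosDef.add_posSemidef (hK ▸ hPTP.inv) ?_
    have hherm : ((lam * σ2) • (1 : Matrix (Fin n) (Fin n) ℝ)).IsHermitian := by
      show ((lam * σ2) • (1 : Matrix (Fin n) (Fin n) ℝ))ᴴ = _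
      rw [Matrix.conjTranspose_smul, Matrix.isHermitian_one.eq, star_trivial]
    refine Matrix.PosSemidef.of_dotProduct_mulVec_nonneg hherm fun x => ?_
    rw [Matrix.smul_mulVec, Matrix.one_mulVec, dotProduct_smul, smul_eq_mul]
    exact mul_nonneg (by positivity) (by simpa using dotProduct_star_self_nonneg x)
  have hKImul : (K + (lam * σ2) • (1 : Matrix (Fin n) (Fin n) ℝ))
      * (K + (lam * σ2) • (1 : Matrix (Fin n) (Fin n) ℝ))⁻¹ = 1 :=
    Matrix.mul_nonsing_inv _ ((Matrix.isUnit_iff_isUnit_det _).1 hKIpd.isUnit)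
  have hKIα : (K + (lam * σ2) • (1 : Matrix (Fin n) (Fin n) ℝ)).mulVec αhat
      = y - P⁻¹.mulVec f := by
    rw [hαhat, Matrix.mulVec_mulVec, hKImul, Matrix.one_mulVec]
  have hPPinv : P * P⁻¹ = 1 :=
    Matrix.mul_nonsing_inv P ((Matrix.isUnit_iff_isUnit_det P).1 hP)
  have hAinj : Function.Injective A.mulVec := Matrix.mulVec_injective_iff_isUnit.2 hAunit
  apply hAinj
  rw [hAx]
  -- compute A.mulVec (K αhat + P⁻¹ f)
  have e1 : A.mulVec (K.mulVec αhat) = K.mulVec αhat + c • αhat := by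
    rw [hA, Matrix.add_mulVec, Matrix.one_mulVec, Matrix.smul_mulVec,
      Matrix.mulVec_mulVec, ← Matrix.mulVec_mulVec, Matrix.mulVec_mulVec, hKmul,
      Matrix.one_mulVec]
  have e2 : A.mulVec (P⁻¹.mulVec f) = P⁻¹.mulVec f + c • Pᵀ.mulVec f := by
    rw [hA, Matrix.add_mulVec, Matrix.one_mulVec, Matrix.smul_mulVec,
      Matrix.mulVec_mulVec, Matrix.mul_assoc, hPPinv, Matrix.mul_one]
  rw [Matrix.mulVec_add, e1, e2]
  have e3 : K.mulVec αhat + c • αhat = y - P⁻¹.mulVec f := by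
    rw [← hKIα, Matrix.add_mulVec, Matrix.smul_mulVec, Matrix.one_mulVec,
      hc, mul_comm σ2 lam]
  rw [show K.mulVec αhat + c • αhat + (P⁻¹.mulVec f + c • Pᵀ.mulVec f)
      = (K.mulVec αhat + c • αhat) + P⁻¹.mulVec f + c • Pᵀ.mulVec f by abel, e3]
  abel
end
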